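/- For every x ≥ 0 the return map can be written as the convex combination Q(x) = exp(a·Φ(x))·x + (1 − exp(a·Φ(x)))·Ψ(x), where 0 < exp(a·Φ(x)) < 1; consequently Q(x) lies between x and Ψ(x), i.e. min(x, Ψ(x)) ≤ Q(x) ≤ max(x, Ψ(x)). -/

import Mathlib

open Real Set Filter

/-- Q(x) is a convex combination of x and Ψ(x); in particular Q(x) lies between x and Ψ(x). -/
theorem stmt9
    (a : ℝ) (ha : a < 0) (Φ F : ℝ → ℝ)
    (hΦc : ContinuousOn Φ (Set.Ici 0)) (hFc : ContinuousOn F (Set.Ici 0))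
    (Φ₁ Φ₂ F₁ F₂ : ℝ) (hΦ₁ : 0 < Φ₁) (hF₁ : 0 < F₁)
    (hΦb : ∀ x : ℝ, 0 ≤ x → Φ₁ ≤ Φ x ∧ Φ x ≤ Φ₂)
    (hFb : ∀ x : ℝ, 0 ≤ x → F₁ ≤ F x ∧ F x ≤ F₂)
    (Q : ℝ → ℝ) (hQ : ∀ x : ℝ, Q x = Real.exp (a * Φ x) * (x + F x))
    (Ψ : ℝ → ℝ)
    (hΨ : ∀ x : ℝ, Ψ x = F x * Real.exp (a * Φ x) / (1 - Real.exp (a * Φ x))) :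
    ∀ x : ℝ, 0 ≤ x →
      Q x = Real.exp (a * Φ x) * x + (1 - Real.exp (a * Φ x)) * Ψ x ∧
      0 < Real.exp (a * Φ x) ∧ Real.exp (a * Φ x) < 1 ∧
      min x (Ψ x) ≤ Q x ∧ Q x ≤ max x (Ψ x) := by
  intro x hx
  set e := Real.exp (a * Φ x) with he
  have hΦx : 0 < Φ x := lt_of_lt_of_le hΦ₁ (hΦb x hx).1
  have he1 : e < 1 := by
    rw [he, ← Real.exp_zero]
    exact Real.exp_lt_exp.mpr (mul_neg_of_neg_of_pos ha hΦx)
  have he0 : 0 < e := Real.exp_pos _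
  have h1e : 0 < 1 - e := by linarith
  have hψ : (1 - e) * Ψ x = F x * e := by
    rw [hΨ, ← he]; field_simp [h1e.ne']
  have hconv : Q x = e * x + (1 - e) * Ψ x := by
    rw [hQ, hψ]; ring
  refine ⟨hconv, he0, he1, ?_, ?_⟩
  · rcases le_total x (Ψ x) with h | h
    · rw [min_eq_left h, hconv]; nlinarith
    · rw [min_eq_right h, hconv]; nlinarith
  · rcases le_total x (Ψ x) with h | h
    · rw [max_eq_right h, hconv]; nlinarith
    · rw [max_eq_left h, hconv]; nlinarith
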